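/- arXiv:2011.05467 — 2 statements merged into one kernel-verified Lean document; each statement's English description precedes it below -/
import Mathlib

section
/- Let 0 < ε < 1/2, 0 < β < 1/4 − ε/2 and μ₀ > 0. Let (E, s) be a k-uniform hypergraph structure on [n] and suppose the direct sum lifting dsum : F₂ⁿ → F₂^E is a (1/2+2μ₀, 2ε)-parity sampler. Let C₁ ⊆ F₂ⁿ be nonempty, C_k = dsum(C₁), and let ỹ ∈ F₂^E satisfy Δ(ỹ, C_k) < 1/4 − ε/2 − β; let z* ∈ C₁ be such that y* = dsum(z*) attains the minimum of Δ(·, ỹ) over C_k. For z' ∈ F₂ⁿ define SAT(z') := Pr_{e∈E}[ Σ_{i∈s(e)} z'_i = ỹ_e mod 2 ] (e uniform), and OPT := max_{z'∈F₂ⁿ} SAT(z'). If z ∈ F₂ⁿ satisfies SAT(z) ≥ OPT − β, then either Δ(z*, z) ≤ 1/4 − μ₀ or Δ(z*, z̄) ≤ 1/4 − μ₀, where z̄ is the coordinatewise complement of z. -/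
open Finset

/-- Relative Hamming distance between two words (uniform measure on coordinates). -/
noncomputable def relHam {m : Type*} [Fintype m] {α : Type*} [DecidableEq α]
    (x y : m → α) : ℝ :=
  ((Finset.univ.filter fun j => x j ≠ y j).card : ℝ) / (Fintype.card m : ℝ)

/-- The bias of a word over `F₂`: `|E_j (−1)^{z_j}|`. -/
noncomputable def bias2 {m : Type*} [Fintype m] (z : m → ZMod 2) : ℝ :=
  |∑ j, (-1 : ℝ) ^ (z j).val| / (Fintype.card m : ℝ)

/-- The direct sum lifting `(dsum z)_e = Σ_{i ∈ s e} z_i (mod 2)`. -/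
def dsumLift {n : ℕ} {E : Type*} (s : E → Finset (Fin n))
    (z : Fin n → ZMod 2) (e : E) : ZMod 2 :=
  ∑ i ∈ s e, z i

/-- The fraction of the `k`-XOR constraints `Σ_{i∈s(e)} z_i = ỹ_e` satisfied by `z`. -/
noncomputable def satFrac {n : ℕ} {E : Type*} [Fintype E] (s : E → Finset (Fin n))
    (yt : E → ZMod 2) (z : Fin n → ZMod 2) : ℝ :=
  ((Finset.univ.filter fun e => dsumLift s z e = yt e).card : ℝ) / (Fintype.card E : ℝ)

section Helpers

variable {m : Type*} [Fintype m]

lemma relHam_symm {α : Type*} [DecidableEq α] (u v : m → α) :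
    relHam u v = relHam v u := by
  unfold relHam
  have hfe : (univ.filter fun j => u j ≠ v j) = univ.filter fun j => v j ≠ u j := by
    apply Finset.filter_congr
    intro j _
    simp [ne_comm]
  rw [hfe]

lemma relHam_triangle [Nonempty m] {α : Type*} [DecidableEq α] (u v w : m → α) :
    relHam u w ≤ relHam u v + relHam v w := by
  classical
  unfold relHam
  have hN : (0:ℝ) < Fintype.card m := by exact_mod_cast Fintype.card_pos
  rw [← add_div, div_le_div_iff_of_pos_right hN]
  have hsub : (univ.filter fun j => u j ≠ w j) ⊆
      (univ.filter fun j => u j ≠ v j) ∪ (univ.filter fun j => v j ≠ w j) := by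
    intro j hj
    simp only [mem_filter, mem_union, mem_univ, true_and] at hj ⊢
    by_contra h
    push_neg at h
    exact hj (h.1.trans h.2)
  calc ((univ.filter fun j => u j ≠ w j).card : ℝ)
      ≤ ((univ.filter fun j => u j ≠ v j) ∪ (univ.filter fun j => v j ≠ w j)).card := by
        exact_mod_cast Finset.card_le_card hsub
    _ ≤ ((univ.filter fun j => u j ≠ v j).card : ℝ) + (univ.filter fun j => v j ≠ w j).card := by
        exact_mod_cast Finset.card_union_le _ _

lemma card_eq_filter_eq [Nonempty m] (u v : m → ZMod 2) :
    ((univ.filter fun j => u j = v j).card : ℝ)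
      = (Fintype.card m : ℝ) - (univ.filter fun j => u j ≠ v j).card := by
  have h := Finset.card_filter_add_card_filter_not
    (s := (univ : Finset m)) (p := fun j => u j = v j)
  rw [Finset.card_univ] at h
  have := congrArg (fun x : ℕ => (x : ℝ)) h
  push_cast at this
  linarith [this]

lemma bias2_add [Nonempty m] (u v : m → ZMod 2) :
    bias2 (fun j => u j + v j) = |1 - 2 * relHam u v| := by
  have hN : (0:ℝ) < Fintype.card m := by exact_mod_cast Fintype.card_pos
  unfold bias2 relHam
  have hsum : ∑ j, (-1:ℝ) ^ ((u j + v j).val)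
      = (Fintype.card m : ℝ) - 2 * (univ.filter fun j => u j ≠ v j).card := by
    rw [← Finset.sum_filter_add_sum_filter_not univ (fun j => u j = v j)]
    have h1 : ∑ j ∈ univ.filter (fun j => u j = v j), (-1:ℝ) ^ ((u j + v j).val)
        = (univ.filter fun j => u j = v j).card := by
      rw [Finset.sum_congr rfl (fun j hj => ?_), Finset.sum_const, nsmul_eq_mul, mul_one]
      simp only [mem_filter] at hj
      have hz : u j + v j = 0 := by
        have h := hj.2
        revert h
        generalize u j = a; generalize v j = b
        revert a b; decide
      rw [hz]; simp
    have h2 : ∑ j ∈ univ.filter (fun j => ¬ u j = v j), (-1:ℝ) ^ ((u j + v j).val)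
        = -((univ.filter fun j => u j ≠ v j).card : ℝ) := by
      rw [Finset.sum_congr rfl (fun j hj => ?_), Finset.sum_const, nsmul_eq_mul, mul_neg, mul_one]
      simp only [mem_filter] at hj
      have hz : u j + v j = 1 := by
        have h := hj.2
        revert h
        generalize u j = a; generalize v j = b
        revert a b; decide
      rw [hz]; simp [ZMod.val_one]
    rw [h1, h2, card_eq_filter_eq u v]
    ring
  rw [hsum]
  rw [show (1:ℝ) - 2 * (((univ.filter fun j => u j ≠ v j).card : ℝ) / (Fintype.card m : ℝ))
      = ((Fintype.card m : ℝ) - 2 * (univ.filter fun j => u j ≠ v j).card) / (Fintype.card m : ℝ) by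
    field_simp]
  rw [abs_div, abs_of_pos hN]

lemma relHam_compl [Nonempty m] (u v : m → ZMod 2) :
    relHam u (fun i => v i + 1) = 1 - relHam u v := by
  have hN : (0:ℝ) < Fintype.card m := by exact_mod_cast Fintype.card_pos
  unfold relHam
  have hfe : (univ.filter fun j => u j ≠ v j + 1) = univ.filter fun j => u j = v j := by
    apply Finset.filter_congr
    intro j _
    constructor
    · intro h
      revert h
      generalize u j = a; generalize v j = b
      revert a b; decide
    · intro h
      revert h
      generalize u j = a; generalize v j = b
      revert a b; decide
  rw [hfe, card_eq_filter_eq u v]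
  field_simp

lemma satFrac_eq {n : ℕ} {E : Type*} [Fintype E] [Nonempty E] (s : E → Finset (Fin n))
    (yt : E → ZMod 2) (z : Fin n → ZMod 2) :
    satFrac s yt z = 1 - relHam (dsumLift s z) yt := by
  have hN : (0:ℝ) < Fintype.card E := by exact_mod_cast Fintype.card_pos
  unfold satFrac relHam
  rw [card_eq_filter_eq (dsumLift s z) yt]
  field_simp

end Helpers

/-- **Unique decoding from approximate CSP solutions.** Under the assumptions of the
unique decoding lemma, any `z` satisfying `SAT(z) ≥ OPT − β` for the `k`-XOR instance
determined by `ỹ` has `z` or its complement within distance `1/4 − μ₀` of `z*`. -/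
theorem stmt_3 (n k : ℕ) (hn : 0 < n)
    (ε β μ₀ : ℝ) (hε0 : 0 < ε) (hε : ε < 1/2) (hβ0 : 0 < β) (hβ : β < 1/4 - ε/2)
    (hμ₀ : 0 < μ₀)
    (E : Type) [Fintype E] [Nonempty E]
    (s : E → Finset (Fin n)) (hs : ∀ e, (s e).card = k)
    (hps : ∀ z : Fin n → ZMod 2, bias2 z ≤ 1/2 + 2*μ₀ → bias2 (dsumLift s z) ≤ 2*ε)
    (C₁ : Set (Fin n → ZMod 2)) (hC₁ : C₁.Nonempty)
    (yt : E → ZMod 2)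
    (zstar : Fin n → ZMod 2) (hzstar : zstar ∈ C₁)
    (hmin : ∀ y ∈ (dsumLift s) '' C₁, relHam (dsumLift s zstar) yt ≤ relHam y yt)
    (hclose : relHam (dsumLift s zstar) yt < 1/4 - ε/2 - β)
    (z : Fin n → ZMod 2)
    (hsat : ∀ z' : Fin n → ZMod 2, satFrac s yt z' - β ≤ satFrac s yt z) :
    relHam zstar z ≤ 1/4 - μ₀ ∨ relHam zstar (fun i => z i + 1) ≤ 1/4 - μ₀ := by
  haveI : Nonempty (Fin n) := ⟨⟨0, hn⟩⟩
  set D1 := relHam (dsumLift s zstar) yt with hD1def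
  set D2 := relHam (dsumLift s z) yt with hD2def
  have hsat1 := hsat zstar
  rw [satFrac_eq, satFrac_eq] at hsat1
  have hD2 : D2 ≤ D1 + β := by
    simp only [← hD1def, ← hD2def] at hsat1
    linarith
  have hD3 : relHam (dsumLift s zstar) (dsumLift s z) ≤ D1 + D2 := by
    calc relHam (dsumLift s zstar) (dsumLift s z)
        ≤ relHam (dsumLift s zstar) yt + relHam yt (dsumLift s z) :=
          relHam_triangle _ _ _
      _ = D1 + D2 := by rw [relHam_symm yt]
  have hlt : relHam (dsumLift s zstar) (dsumLift s z) < 1/2 - ε := by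
    linarith
  set w : Fin n → ZMod 2 := fun i => zstar i + z i with hwdef
  have hlift : dsumLift s w = fun e => dsumLift s zstar e + dsumLift s z e := by
    funext e
    simp [hwdef, dsumLift, Finset.sum_add_distrib]
  have hb : bias2 (dsumLift s w)
      = |1 - 2 * relHam (dsumLift s zstar) (dsumLift s z)| := by
    rw [hlift]
    exact bias2_add _ _
  have hbgt : 2*ε < bias2 (dsumLift s w) := by
    rw [hb]
    have h2 : 2*ε < 1 - 2 * relHam (dsumLift s zstar) (dsumLift s z) := by linarith
    exact lt_of_lt_of_le h2 (le_abs_self _)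
  have hbw : 1/2 + 2*μ₀ < bias2 w := by
    by_contra h
    push_neg at h
    exact absurd (hps w h) (not_le.mpr hbgt)
  have hb2 : bias2 w = |1 - 2 * relHam zstar z| := bias2_add _ _
  rw [hb2] at hbw
  rcases lt_abs.mp hbw with h | h
  · left; linarith
  · right
    rw [relHam_compl]
    linarith
end

section
/- Let G be a d-regular simple graph on a nonempty finite vertex set V with d ≥ 1, and let γ ≥ 0 be such that G is a γ-two-sided spectral expander in the following sense: for all u, v : V → ℝ with E_{a∈V} u(a) = 0 and E_{b∈V} v(b) = 0, |E_{(a,b)}[u(a)·v(b)]| ≤ γ·√(E_{a∈V} u(a)²)·√(E_{b∈V} v(b)²), where (a,b) is a uniformly random ordered pair of adjacent vertices. Then for all k₁, k₂ ≥ 1 and all f : W_G(k₁) → ℝ, g : W_G(k₂) → ℝ with E_{w∈W_G(k₁)} f(w) = 0 and E_{w'∈W_G(k₂)} g(w') = 0 (uniform averages), |E_{v∈W_G(k₁+k₂)}[ f(v(1,k₁))·g(v(k₁+1, k₁+k₂)) ]| ≤ γ·√(E_{w∈W_G(k₁)} f(w)²)·√(E_{w'∈W_G(k₂)} g(w')²).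 Equivalently, the second singular value of every swap operator between walk sets of G is at most γ, so the collection of walks on G is (γ,1)-splittable. -/
open Finset
open scoped Classical

/-- `w : Fin k → V` is a walk in `G`: consecutive vertices are adjacent. -/
def IsWalk {V : Type*} (G : SimpleGraph V) {k : ℕ} (w : Fin k → V) : Prop :=
  ∀ (m : ℕ) (h : m + 1 < k), G.Adj (w ⟨m, by omega⟩) (w ⟨m + 1, h⟩)

/-- The set `W_G(k)` of walks on `k` vertices of `G`. -/
noncomputable def walkSet {V : Type*} [Fintype V] (G : SimpleGraph V) (k : ℕ) :
    Finset (Fin k → V) :=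
  Finset.univ.filter fun w => IsWalk G w

section Aux
variable {V : Type} [Fintype V] (G : SimpleGraph V)

lemma mem_walkSet {k : ℕ} {w : Fin k → V} : w ∈ walkSet G k ↔ IsWalk G w := by
  simp [walkSet]

lemma isWalk_init {k : ℕ} {w : Fin (k + 2) → V} (hw : IsWalk G w) :
    IsWalk G (Fin.init w) := fun m h => hw m (by omega)

lemma isWalk_tail {k : ℕ} {w : Fin (k + 2) → V} (hw : IsWalk G w) :
    IsWalk G (Fin.tail w) := fun m h => hw (m + 1) (by omega)

lemma snoc_mk_lt {k : ℕ} (w : Fin (k+1) → V) (a : V) {m : ℕ} (h2 : m < k + 2) (h : m < k + 1) :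
    (Fin.snoc w a : Fin (k+2) → V) ⟨m, h2⟩ = w ⟨m, h⟩ := by
  have e : (⟨m, h2⟩ : Fin (k+2)) = Fin.castSucc ⟨m, h⟩ := rfl
  rw [e, Fin.snoc_castSucc]

lemma snoc_mk_last {k : ℕ} (w : Fin (k+1) → V) (a : V) (h2 : k + 1 < k + 2) :
    (Fin.snoc w a : Fin (k+2) → V) ⟨k+1, h2⟩ = a := by
  have e : (⟨k+1, h2⟩ : Fin (k+2)) = Fin.last (k+1) := rfl
  rw [e, Fin.snoc_last]

lemma isWalk_snoc {k : ℕ} {w : Fin (k+1) → V} (hw : IsWalk G w) {a : V}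
    (ha : G.Adj (w (Fin.last k)) a) : IsWalk G (Fin.snoc w a) := by
  intro m h
  rcases lt_or_ge (m + 1) (k + 1) with h1 | h1
  · rw [snoc_mk_lt w a _ (by omega), snoc_mk_lt w a h h1]
    exact hw m h1
  · have hm : m = k := by omega
    subst hm
    rw [snoc_mk_lt w a _ (by omega), snoc_mk_last w a h]
    exact ha

lemma fin_mk_zero {k : ℕ} (h : 0 < k + 1) : (⟨0, h⟩ : Fin (k+1)) = 0 := rfl

lemma cons_mk_zero {k : ℕ} (a : V) (w : Fin (k+1) → V) (h : 0 < k + 2) :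
    (Fin.cons a w : Fin (k+2) → V) ⟨0, h⟩ = a := by
  rw [fin_mk_zero, Fin.cons_zero]

lemma cons_mk_succ {k : ℕ} (a : V) (w : Fin (k+1) → V) {m : ℕ} (h : m + 1 < k + 2)
    (hm : m < k + 1) : (Fin.cons a w : Fin (k+2) → V) ⟨m + 1, h⟩ = w ⟨m, hm⟩ := by
  have e : (⟨m + 1, h⟩ : Fin (k+2)) = Fin.succ ⟨m, hm⟩ := rfl
  rw [e, Fin.cons_succ]

lemma isWalk_cons {k : ℕ} {w : Fin (k+1) → V} (hw : IsWalk G w) {a : V}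
    (ha : G.Adj a (w 0)) : IsWalk G (Fin.cons a w) := by
  intro m h
  match m, h with
  | 0, h =>
    rw [cons_mk_zero, cons_mk_succ a w h (by omega)]
    exact ha
  | (m+1), h =>
    rw [cons_mk_succ a w _ (by omega), cons_mk_succ a w h (by omega)]
    exact hw m (by omega)

lemma append_mk_left {k₁ k₂ : ℕ} (w : Fin k₁ → V) (w' : Fin k₂ → V) {m : ℕ}
    (h : m < k₁ + k₂) (hm : m < k₁) :
    (Fin.append w w' : Fin (k₁ + k₂) → V) ⟨m, h⟩ = w ⟨m, hm⟩ := by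
  have e : (⟨m, h⟩ : Fin (k₁ + k₂)) = Fin.castAdd k₂ ⟨m, hm⟩ := rfl
  rw [e, Fin.append_left]

lemma append_mk_right {k₁ k₂ : ℕ} (w : Fin k₁ → V) (w' : Fin k₂ → V) {m : ℕ}
    (h : m < k₁ + k₂) (hm : k₁ ≤ m) :
    (Fin.append w w' : Fin (k₁ + k₂) → V) ⟨m, h⟩ = w' ⟨m - k₁, by omega⟩ := by
  have e : (⟨m, h⟩ : Fin (k₁ + k₂)) = Fin.natAdd k₁ ⟨m - k₁, by omega⟩ := by
    apply Fin.ext; simp [Fin.natAdd]; omega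
  rw [e, Fin.append_right]

lemma isWalk_append {K₁ k₂ : ℕ} (hk₂ : 1 ≤ k₂) {w : Fin (K₁+1) → V} {w' : Fin k₂ → V}
    (hw : IsWalk G w) (hw' : IsWalk G w')
    (ha : G.Adj (w (Fin.last K₁)) (w' ⟨0, hk₂⟩)) : IsWalk G (Fin.append w w') := by
  intro m h
  rcases lt_trichotomy (m + 1) (K₁ + 1) with h1 | h1 | h1
  · rw [append_mk_left w w' _ (by omega), append_mk_left w w' h h1]
    exact hw m h1
  · have hm : m = K₁ := by omega
    subst hm
    rw [append_mk_left w w' _ (by omega), append_mk_right w w' h (by omega)]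
    have e : (⟨m + 1 - (m + 1), by omega⟩ : Fin k₂) = ⟨0, hk₂⟩ := by
      apply Fin.ext; simp
    rw [e]
    exact ha
  · rw [append_mk_right w w' _ (by omega), append_mk_right w w' h (by omega)]
    have e1 : m - (K₁ + 1) + 1 = m + 1 - (K₁ + 1) := by omega
    have := hw' (m - (K₁+1)) (by omega)
    convert this using 3
    omega

variable {d : ℕ}

lemma card_walk_last (hreg : G.IsRegularOfDegree d) :
    ∀ (k : ℕ) (a : V),
      ((walkSet G (k+1)).filter fun w => w (Fin.last k) = a).card = d ^ k := by
  intro k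
  induction k with
  | zero =>
    intro a
    have e : ((walkSet G 1).filter fun w => w (Fin.last 0) = a) = {fun _ => a} := by
      ext w
      simp only [Finset.mem_filter, Finset.mem_singleton, mem_walkSet]
      constructor
      · rintro ⟨-, h⟩
        funext i
        rw [Subsingleton.elim i (Fin.last 0)]
        exact h
      · rintro rfl
        exact ⟨fun m h => absurd h (by omega), rfl⟩
    rw [e]
    simp
  | succ k ih =>
    intro a
    have key : ((walkSet G (k+2)).filter fun w => w (Fin.last (k+1)) = a).card
        = ((walkSet G (k+1)).filter fun w => G.Adj (w (Fin.last k)) a).card := by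
      apply Finset.card_nbij' (i := fun w => Fin.init w) (j := fun w => Fin.snoc w a)
      · intro w hw
        rw [Finset.mem_coe, Finset.mem_filter, mem_walkSet] at hw ⊢
        obtain ⟨hw1, hw2⟩ := hw
        refine ⟨isWalk_init G hw1, ?_⟩
        show G.Adj (w (Fin.castSucc (Fin.last k))) a
        exact hw2 ▸ hw1 k (by omega)
      · intro w hw
        rw [Finset.mem_coe, Finset.mem_filter, mem_walkSet] at hw ⊢
        obtain ⟨hw1, hw2⟩ := hw
        exact ⟨isWalk_snoc G hw1 hw2, Fin.snoc_last _ _⟩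
      · intro w hw
        rw [Finset.mem_coe, Finset.mem_filter] at hw
        beta_reduce
        rw [← hw.2, Fin.snoc_init_self]
      · intro w _
        exact Fin.init_snoc _ _
    rw [key]
    have hmaps : ∀ w ∈ (walkSet G (k+1)).filter fun w => G.Adj (w (Fin.last k)) a,
        w (Fin.last k) ∈ G.neighborFinset a := by
      intro w hw
      rw [Finset.mem_filter] at hw
      rw [SimpleGraph.mem_neighborFinset]
      exact hw.2.symm
    rw [Finset.card_eq_sum_card_fiberwise hmaps]
    have hfib : ∀ b ∈ G.neighborFinset a,
        (((walkSet G (k+1)).filter fun w => G.Adj (w (Fin.last k)) a).filter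
          fun w => w (Fin.last k) = b).card = d ^ k := by
      intro b hb
      rw [SimpleGraph.mem_neighborFinset] at hb
      have e : (((walkSet G (k+1)).filter fun w => G.Adj (w (Fin.last k)) a).filter
          fun w => w (Fin.last k) = b) = (walkSet G (k+1)).filter fun w => w (Fin.last k) = b := by
        ext w
        simp only [Finset.mem_filter]
        constructor
        · rintro ⟨⟨h1, -⟩, h3⟩; exact ⟨h1, h3⟩
        · rintro ⟨h1, h3⟩; exact ⟨⟨h1, h3 ▸ hb.symm⟩, h3⟩
      rw [e, ih b]
    rw [Finset.sum_congr rfl hfib, Finset.sum_const,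
      SimpleGraph.card_neighborFinset_eq_degree, hreg a, smul_eq_mul, pow_succ]
    ring

lemma card_walk_first (hreg : G.IsRegularOfDegree d) :
    ∀ (k : ℕ) (a : V),
      ((walkSet G (k+1)).filter fun w => w ⟨0, Nat.succ_pos _⟩ = a).card = d ^ k := by
  intro k
  induction k with
  | zero =>
    intro a
    have e : ((walkSet G 1).filter fun w => w ⟨0, Nat.succ_pos _⟩ = a) = {fun _ => a} := by
      ext w
      simp only [Finset.mem_filter, Finset.mem_singleton, mem_walkSet]
      constructor
      · rintro ⟨-, h⟩
        funext i
        rw [Subsingleton.elim i (⟨0, Nat.succ_pos _⟩ : Fin 1)]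
        exact h
      · rintro rfl
        exact ⟨fun m h => absurd h (by omega), rfl⟩
    rw [e]
    simp
  | succ k ih =>
    intro a
    have key : ((walkSet G (k+2)).filter fun w => w ⟨0, Nat.succ_pos _⟩ = a).card
        = ((walkSet G (k+1)).filter fun w => G.Adj a (w ⟨0, Nat.succ_pos _⟩)).card := by
      apply Finset.card_nbij' (i := fun w => Fin.tail w) (j := fun w => Fin.cons a w)
      · intro w hw
        rw [Finset.mem_coe, Finset.mem_filter, mem_walkSet] at hw ⊢
        obtain ⟨hw1, hw2⟩ := hw
        refine ⟨isWalk_tail G hw1, ?_⟩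
        show G.Adj a (w (Fin.succ ⟨0, Nat.succ_pos _⟩))
        exact hw2 ▸ hw1 0 (by omega)
      · intro w hw
        rw [Finset.mem_coe, Finset.mem_filter, mem_walkSet] at hw ⊢
        obtain ⟨hw1, hw2⟩ := hw
        refine ⟨isWalk_cons G hw1 hw2, cons_mk_zero a w _⟩
      · intro w hw
        rw [Finset.mem_coe, Finset.mem_filter] at hw
        have : w ⟨0, Nat.succ_pos _⟩ = w 0 := rfl
        beta_reduce
        rw [← hw.2, this, Fin.cons_self_tail]
      · intro w _
        exact Fin.tail_cons _ _
    rw [key]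
    have hmaps : ∀ w ∈ (walkSet G (k+1)).filter fun w => G.Adj a (w ⟨0, Nat.succ_pos _⟩),
        w ⟨0, Nat.succ_pos _⟩ ∈ G.neighborFinset a := by
      intro w hw
      rw [Finset.mem_filter] at hw
      rw [SimpleGraph.mem_neighborFinset]
      exact hw.2
    rw [Finset.card_eq_sum_card_fiberwise hmaps]
    have hfib : ∀ b ∈ G.neighborFinset a,
        (((walkSet G (k+1)).filter fun w => G.Adj a (w ⟨0, Nat.succ_pos _⟩)).filter
          fun w => w ⟨0, Nat.succ_pos _⟩ = b).card = d ^ k := by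
      intro b hb
      rw [SimpleGraph.mem_neighborFinset] at hb
      have e : (((walkSet G (k+1)).filter fun w => G.Adj a (w ⟨0, Nat.succ_pos _⟩)).filter
          fun w => w ⟨0, Nat.succ_pos _⟩ = b)
          = (walkSet G (k+1)).filter fun w => w ⟨0, Nat.succ_pos _⟩ = b := by
        ext w
        simp only [Finset.mem_filter]
        constructor
        · rintro ⟨⟨h1, -⟩, h3⟩; exact ⟨h1, h3⟩
        · rintro ⟨h1, h3⟩; exact ⟨⟨h1, h3 ▸ hb⟩, h3⟩
      rw [e, ih b]
    rw [Finset.sum_congr rfl hfib, Finset.sum_const,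
      SimpleGraph.card_neighborFinset_eq_degree, hreg a, smul_eq_mul, pow_succ]
    ring

lemma card_walkSet (hreg : G.IsRegularOfDegree d) (k : ℕ) :
    (walkSet G (k+1)).card = Fintype.card V * d ^ k := by
  rw [Finset.card_eq_sum_card_fiberwise
    (f := fun w => w (Fin.last k)) (t := Finset.univ) (fun _ _ => Finset.mem_univ _)]
  rw [Finset.sum_congr rfl (fun a _ => card_walk_last G hreg k a), Finset.sum_const,
    Finset.card_univ, smul_eq_mul]

lemma card_adjPairs (hreg : G.IsRegularOfDegree d) :
    (Finset.univ.filter fun p : V × V => G.Adj p.1 p.2).card = Fintype.card V * d := by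
  rw [Finset.card_eq_sum_card_fiberwise
    (f := Prod.fst) (t := Finset.univ) (fun _ _ => Finset.mem_univ _)]
  have hfib : ∀ a ∈ (Finset.univ : Finset V),
      ((Finset.univ.filter fun p : V × V => G.Adj p.1 p.2).filter fun p => p.1 = a).card = d := by
    intro a _
    rw [← hreg a, ← SimpleGraph.card_neighborFinset_eq_degree]
    apply Finset.card_nbij' (i := fun p => p.2) (j := fun b => (a, b))
    · intro p hp
      simp only [Finset.mem_coe, Finset.mem_filter, Finset.mem_univ, true_and] at hp
      rw [Finset.mem_coe, SimpleGraph.mem_neighborFinset]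
      exact hp.2 ▸ hp.1
    · intro b hb
      rw [Finset.mem_coe, SimpleGraph.mem_neighborFinset] at hb
      simp only [Finset.mem_coe, Finset.mem_filter, Finset.mem_univ, true_and]
      exact ⟨hb, trivial⟩
    · intro p hp
      simp only [Finset.mem_coe, Finset.mem_filter, Finset.mem_univ, true_and] at hp
      rw [← hp.2]
    · intro b _
      rfl
  rw [Finset.sum_congr rfl hfib, Finset.sum_const, Finset.card_univ, smul_eq_mul]

lemma split_sum {K₁ k₂ : ℕ} (hk₂ : 1 ≤ k₂) (F : (Fin (K₁+1) → V) → ℝ) (Gg : (Fin k₂ → V) → ℝ) :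
    ∑ v ∈ walkSet G (K₁+1+k₂),
        F (fun m => v (Fin.castAdd k₂ m)) * Gg (fun m => v (Fin.natAdd (K₁+1) m))
    = ∑ p ∈ Finset.univ.filter (fun p : V × V => G.Adj p.1 p.2),
        (∑ w ∈ (walkSet G (K₁+1)).filter (fun w => w (Fin.last K₁) = p.1), F w) *
        (∑ w' ∈ (walkSet G k₂).filter (fun w' => w' ⟨0, hk₂⟩ = p.2), Gg w') := by
  set E := Finset.univ.filter (fun p : V × V => G.Adj p.1 p.2) with hE
  set T := ((walkSet G (K₁+1)) ×ˢ (walkSet G k₂)).filter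
    (fun q => G.Adj (q.1 (Fin.last K₁)) (q.2 ⟨0, hk₂⟩)) with hT
  have step1 : ∑ v ∈ walkSet G (K₁+1+k₂),
      F (fun m => v (Fin.castAdd k₂ m)) * Gg (fun m => v (Fin.natAdd (K₁+1) m))
      = ∑ q ∈ T, F q.1 * Gg q.2 := by
    apply Finset.sum_nbij'
      (i := fun v => ((fun m => v (Fin.castAdd k₂ m)), (fun m => v (Fin.natAdd (K₁+1) m))))
      (j := fun q => Fin.append q.1 q.2)
    · intro v hv
      rw [mem_walkSet] at hv
      rw [hT, Finset.mem_filter, Finset.mem_product, mem_walkSet, mem_walkSet]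
      refine ⟨⟨fun m h => hv m (by omega), fun m h => hv (K₁+1+m) (by omega)⟩, ?_⟩
      exact hv K₁ (by omega)
    · intro q hq
      rw [hT, Finset.mem_filter, Finset.mem_product, mem_walkSet, mem_walkSet] at hq
      rw [mem_walkSet]
      exact isWalk_append G hk₂ hq.1.1 hq.1.2 hq.2
    · intro v _
      exact Fin.append_castAdd_natAdd
    · intro q _
      refine Prod.ext ?_ ?_
      · funext m; exact Fin.append_left _ _ m
      · funext m; exact Fin.append_right _ _ m
    · intro v _
      rfl
  rw [step1]
  have hmaps : ∀ q ∈ T, (q.1 (Fin.last K₁), q.2 (⟨0, hk₂⟩ : Fin k₂)) ∈ E := by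
    intro q hq
    rw [hT, Finset.mem_filter] at hq
    rw [hE, Finset.mem_filter]
    exact ⟨Finset.mem_univ _, hq.2⟩
  rw [← Finset.sum_fiberwise_of_maps_to hmaps (fun q : _ × _ => F q.1 * Gg q.2)]
  refine Finset.sum_congr rfl fun p hp => ?_
  rw [hE, Finset.mem_filter] at hp
  have efib : T.filter (fun q => (q.1 (Fin.last K₁), q.2 (⟨0, hk₂⟩ : Fin k₂)) = p)
      = ((walkSet G (K₁+1)).filter (fun w => w (Fin.last K₁) = p.1)) ×ˢ
        ((walkSet G k₂).filter (fun w' => w' ⟨0, hk₂⟩ = p.2)) := by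
    ext q
    rw [Finset.mem_filter, hT, Finset.mem_filter, Finset.mem_product,
      Finset.mem_product, Finset.mem_filter, Finset.mem_filter]
    constructor
    · rintro ⟨⟨⟨hq1, hq2⟩, -⟩, hq4⟩
      rw [Prod.ext_iff] at hq4
      exact ⟨⟨hq1, hq4.1⟩, ⟨hq2, hq4.2⟩⟩
    · rintro ⟨⟨hq1, hq3⟩, hq2, hq4⟩
      refine ⟨⟨⟨hq1, hq2⟩, ?_⟩, ?_⟩
      · rw [hq3, hq4]; exact hp.2
      · rw [Prod.ext_iff]; exact ⟨hq3, hq4⟩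
  rw [efib, Finset.sum_product]
  rw [Finset.sum_mul_sum]

end Aux

set_option maxHeartbeats 1000000 in
/-- **Expander walks are splittable.** If `G` is a `d`-regular `γ`-two-sided spectral
expander (in the bilinear-form sense over uniformly random ordered adjacent pairs), then
for all `k₁, k₂ ≥ 1` and all mean-zero `f : W_G(k₁) → ℝ`, `g : W_G(k₂) → ℝ`,
`|E_{v∈W_G(k₁+k₂)}[f(v(1,k₁))·g(v(k₁+1,k₁+k₂))]| ≤ γ·√(E f²)·√(E g²)`;
i.e. every swap operator between walk sets has second singular value at most `γ`. -/
theorem stmt_16 (V : Type) [Fintype V] [Nonempty V]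
    (G : SimpleGraph V) (d : ℕ) (hd : 1 ≤ d) (hreg : G.IsRegularOfDegree d)
    (γ : ℝ) (hγ : 0 ≤ γ)
    (hexp : ∀ u v : V → ℝ,
      (∑ a, u a) / (Fintype.card V : ℝ) = 0 →
      (∑ b, v b) / (Fintype.card V : ℝ) = 0 →
      |(∑ p ∈ Finset.univ.filter (fun p : V × V => G.Adj p.1 p.2), u p.1 * v p.2)
          / ((Finset.univ.filter (fun p : V × V => G.Adj p.1 p.2)).card : ℝ)|
        ≤ γ * Real.sqrt ((∑ a, u a ^ 2) / (Fintype.card V : ℝ))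
            * Real.sqrt ((∑ b, v b ^ 2) / (Fintype.card V : ℝ)))
    (k₁ k₂ : ℕ) (hk₁ : 1 ≤ k₁) (hk₂ : 1 ≤ k₂)
    (f : (Fin k₁ → V) → ℝ) (g : (Fin k₂ → V) → ℝ)
    (hf : (∑ w ∈ walkSet G k₁, f w) / ((walkSet G k₁).card : ℝ) = 0)
    (hg : (∑ w' ∈ walkSet G k₂, g w') / ((walkSet G k₂).card : ℝ) = 0) :
    |(∑ v ∈ walkSet G (k₁ + k₂),
        f (fun m => v (Fin.castAdd k₂ m)) * g (fun m => v (Fin.natAdd k₁ m)))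
        / ((walkSet G (k₁ + k₂)).card : ℝ)|
      ≤ γ * Real.sqrt ((∑ w ∈ walkSet G k₁, f w ^ 2) / ((walkSet G k₁).card : ℝ))
          * Real.sqrt ((∑ w' ∈ walkSet G k₂, g w' ^ 2) / ((walkSet G k₂).card : ℝ)) := by
  obtain ⟨K₁, rfl⟩ : ∃ K, k₁ = K + 1 := ⟨k₁ - 1, by omega⟩
  obtain ⟨K₂, rfl⟩ : ∃ K, k₂ = K + 1 := ⟨k₂ - 1, by omega⟩
  have hn0 : (0:ℝ) < (Fintype.card V : ℝ) := by exact_mod_cast Fintype.card_pos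
  have hd0 : (0:ℝ) < (d:ℝ) := by exact_mod_cast hd
  set n : ℝ := (Fintype.card V : ℝ) with hn
  set D1 : ℝ := (d:ℝ) ^ K₁ with hD1
  set D2 : ℝ := (d:ℝ) ^ K₂ with hD2
  have hD1pos : (0:ℝ) < D1 := pow_pos hd0 _
  have hD2pos : (0:ℝ) < D2 := pow_pos hd0 _
  set E := Finset.univ.filter (fun p : V × V => G.Adj p.1 p.2) with hEdef
  set W1 := walkSet G (K₁ + 1) with hW1
  set W2 := walkSet G (K₂ + 1) with hW2
  set S1 : V → ℝ := fun a => ∑ w ∈ W1.filter (fun w => w (Fin.last K₁) = a), f w with hS1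
  set S2 : V → ℝ := fun b => ∑ w' ∈ W2.filter (fun w' => w' ⟨0, hk₂⟩ = b), g w' with hS2
  -- cardinalities
  have hcard1 : (W1.card : ℝ) = n * D1 := by
    rw [hW1, card_walkSet G hreg K₁, hn, hD1]; push_cast; ring
  have hcard2 : (W2.card : ℝ) = n * D2 := by
    rw [hW2, card_walkSet G hreg K₂, hn, hD2]; push_cast; ring
  have hcardW : ((walkSet G (K₁ + 1 + (K₂ + 1))).card : ℝ) = n * (D1 * D2 * (d:ℝ)) := by
    have e : K₁ + 1 + (K₂ + 1) = K₁ + 1 + K₂ + 1 := by omega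
    rw [e, card_walkSet G hreg (K₁ + 1 + K₂), hn, hD1, hD2]
    push_cast
    rw [pow_add, pow_add, pow_one]
    ring
  have hcardE : (E.card : ℝ) = n * (d:ℝ) := by
    rw [hEdef, card_adjPairs G hreg, hn]; push_cast; ring
  -- zero means
  have hf0 : ∑ w ∈ W1, f w = 0 := by
    have hne : (W1.card : ℝ) ≠ 0 := by rw [hcard1]; positivity
    rcases div_eq_zero_iff.mp hf with h | h
    · exact h
    · exact absurd h hne
  have hg0 : ∑ w' ∈ W2, g w' = 0 := by
    have hne : (W2.card : ℝ) ≠ 0 := by rw [hcard2]; positivity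
    rcases div_eq_zero_iff.mp hg with h | h
    · exact h
    · exact absurd h hne
  have hfib1 : ∑ a, S1 a = ∑ w ∈ W1, f w := by
    simp only [hS1]
    exact Finset.sum_fiberwise_of_maps_to (fun w _ => Finset.mem_univ _) f
  have hfib2 : ∑ b, S2 b = ∑ w' ∈ W2, g w' := by
    simp only [hS2]
    exact Finset.sum_fiberwise_of_maps_to (fun w _ => Finset.mem_univ _) g
  have hu0 : (∑ a, S1 a / D1) / n = 0 := by
    rw [← Finset.sum_div, hfib1, hf0]
    simp
  have hv0 : (∑ b, S2 b / D2) / n = 0 := by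
    rw [← Finset.sum_div, hfib2, hg0]
    simp
  -- sum of squares bounds
  have hsq1 : ∑ a, (S1 a / D1) ^ 2 ≤ (∑ w ∈ W1, f w ^ 2) / D1 := by
    have hb : ∀ a : V, (S1 a / D1) ^ 2
        ≤ (∑ w ∈ W1.filter (fun w => w (Fin.last K₁) = a), f w ^ 2) / D1 := by
      intro a
      have hcardfib : (((W1.filter (fun w => w (Fin.last K₁) = a)).card : ℕ) : ℝ) = D1 := by
        rw [hW1, card_walk_last G hreg K₁ a, hD1]; push_cast; ring
      have hcs := sq_sum_le_card_mul_sum_sq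
        (s := W1.filter (fun w => w (Fin.last K₁) = a)) (f := f)
      rw [hcardfib] at hcs
      have e1 : (S1 a / D1) ^ 2
          = (∑ w ∈ W1.filter (fun w => w (Fin.last K₁) = a), f w) ^ 2 / D1 ^ 2 := by
        rw [hS1, div_pow]
      rw [e1]
      calc (∑ w ∈ W1.filter (fun w => w (Fin.last K₁) = a), f w) ^ 2 / D1 ^ 2
          ≤ (D1 * ∑ w ∈ W1.filter (fun w => w (Fin.last K₁) = a), f w ^ 2) / D1 ^ 2 := by
            gcongr
        _ = (∑ w ∈ W1.filter (fun w => w (Fin.last K₁) = a), f w ^ 2) / D1 := by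
            rw [pow_two, mul_div_mul_left _ _ (ne_of_gt hD1pos)]
    calc ∑ a, (S1 a / D1) ^ 2
        ≤ ∑ a, (∑ w ∈ W1.filter (fun w => w (Fin.last K₁) = a), f w ^ 2) / D1 :=
          Finset.sum_le_sum (fun a _ => hb a)
      _ = (∑ w ∈ W1, f w ^ 2) / D1 := by
          rw [← Finset.sum_div]
          congr 1
          exact Finset.sum_fiberwise_of_maps_to (fun w _ => Finset.mem_univ _) (fun w => f w ^ 2)
  have hsq2 : ∑ b, (S2 b / D2) ^ 2 ≤ (∑ w' ∈ W2, g w' ^ 2) / D2 := by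
    have hb : ∀ b : V, (S2 b / D2) ^ 2
        ≤ (∑ w' ∈ W2.filter (fun w' => w' ⟨0, hk₂⟩ = b), g w' ^ 2) / D2 := by
      intro b
      have hcardfib : (((W2.filter (fun w' => w' ⟨0, hk₂⟩ = b)).card : ℕ) : ℝ) = D2 := by
        rw [hW2, card_walk_first G hreg K₂ b, hD2]; push_cast; ring
      have hcs := sq_sum_le_card_mul_sum_sq
        (s := W2.filter (fun w' => w' ⟨0, hk₂⟩ = b)) (f := g)
      rw [hcardfib] at hcs
      have e1 : (S2 b / D2) ^ 2
          = (∑ w' ∈ W2.filter (fun w' => w' ⟨0, hk₂⟩ = b), g w') ^ 2 / D2 ^ 2 := by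
        rw [hS2, div_pow]
      rw [e1]
      calc (∑ w' ∈ W2.filter (fun w' => w' ⟨0, hk₂⟩ = b), g w') ^ 2 / D2 ^ 2
          ≤ (D2 * ∑ w' ∈ W2.filter (fun w' => w' ⟨0, hk₂⟩ = b), g w' ^ 2) / D2 ^ 2 := by
            gcongr
        _ = (∑ w' ∈ W2.filter (fun w' => w' ⟨0, hk₂⟩ = b), g w' ^ 2) / D2 := by
            rw [pow_two, mul_div_mul_left _ _ (ne_of_gt hD2pos)]
    calc ∑ b, (S2 b / D2) ^ 2
        ≤ ∑ b, (∑ w' ∈ W2.filter (fun w' => w' ⟨0, hk₂⟩ = b), g w' ^ 2) / D2 :=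
          Finset.sum_le_sum (fun b _ => hb b)
      _ = (∑ w' ∈ W2, g w' ^ 2) / D2 := by
          rw [← Finset.sum_div]
          congr 1
          exact Finset.sum_fiberwise_of_maps_to (fun w _ => Finset.mem_univ _) (fun w' => g w' ^ 2)
  -- the key application of the expander hypothesis
  have key := hexp (fun a => S1 a / D1) (fun b => S2 b / D2) hu0 hv0
  have key' : |(∑ p ∈ E, (S1 p.1 / D1) * (S2 p.2 / D2)) / (E.card : ℝ)|
      ≤ γ * Real.sqrt ((∑ a, (S1 a / D1) ^ 2) / n)
          * Real.sqrt ((∑ b, (S2 b / D2) ^ 2) / n) := key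
  -- splitting identity
  have hsplit := split_sum G (K₁ := K₁) hk₂ f g
  rw [← hW1, ← hW2, ← hEdef] at hsplit
  have hLHS : (∑ v ∈ walkSet G (K₁ + 1 + (K₂ + 1)),
        f (fun m => v (Fin.castAdd (K₂ + 1) m)) * g (fun m => v (Fin.natAdd (K₁ + 1) m)))
        / ((walkSet G (K₁ + 1 + (K₂ + 1))).card : ℝ)
      = (∑ p ∈ E, (S1 p.1 / D1) * (S2 p.2 / D2)) / (E.card : ℝ) := by
    have h1 : ∑ p ∈ E, (S1 p.1 / D1) * (S2 p.2 / D2)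
        = (∑ p ∈ E, S1 p.1 * S2 p.2) / (D1 * D2) := by
      rw [Finset.sum_div]
      exact Finset.sum_congr rfl fun p _ => div_mul_div_comm _ _ _ _
    rw [h1, ← hsplit, hcardE, hcardW, div_div]
    congr 1
    ring
  rw [hLHS]
  refine le_trans key' ?_
  have h1 : (∑ a, (S1 a / D1) ^ 2) / n ≤ (∑ w ∈ W1, f w ^ 2) / (W1.card : ℝ) := by
    rw [hcard1]
    calc (∑ a, (S1 a / D1) ^ 2) / n ≤ ((∑ w ∈ W1, f w ^ 2) / D1) / n := by gcongr
      _ = (∑ w ∈ W1, f w ^ 2) / (n * D1) := by rw [div_div, mul_comm]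
  have h2 : (∑ b, (S2 b / D2) ^ 2) / n ≤ (∑ w' ∈ W2, g w' ^ 2) / (W2.card : ℝ) := by
    rw [hcard2]
    calc (∑ b, (S2 b / D2) ^ 2) / n ≤ ((∑ w' ∈ W2, g w' ^ 2) / D2) / n := by gcongr
      _ = (∑ w' ∈ W2, g w' ^ 2) / (n * D2) := by rw [div_div, mul_comm]
  gcongr
end
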